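/- With h(a) as above (the expected terminal payoff of the put-call portfolio when the appreciation rate is a), h(r) = e^{rT}·X₀, where X₀ = μ_p·p_BS(S₀,K_p,r,T,σ) + μ_c·c_BS(S₀,K_c,r,T,σ) is the initial Black-Scholes cost of the portfolio. Hence for the proportion μ_c/μ_p = (1 − Φ(d_p))/Φ(d_c), the average gain E X_T − e^{rT}X₀ is strictly positive whenever a ≠ r and zero when a = r. -/

import Mathlib

open MeasureTheory ProbabilityTheory Real Set

/-- Standard normal CDF. -/
noncomputable def Phi (x : ℝ) : ℝ :=
  ∫ y in Set.Iic x, (Real.sqrt (2 * Real.pi))⁻¹ * Real.exp (-(y ^ 2) / 2)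

/-- Standard normal density. -/
noncomputable def phi (y : ℝ) : ℝ := (Real.sqrt (2 * Real.pi))⁻¹ * Real.exp (-(y ^ 2) / 2)

/-- Black-Scholes d value. -/
noncomputable def dBS (S₀ K r T σ : ℝ) : ℝ :=
  (Real.log (S₀ / K) + T * (r + σ ^ 2 / 2)) / (σ * Real.sqrt T)

/-- Black-Scholes call price (closed form). -/
noncomputable def callBS (S₀ K r T σ : ℝ) : ℝ :=
  S₀ * Phi (dBS S₀ K r T σ) - K * Real.exp (-(r * T)) * Phi (dBS S₀ K r T σ - σ * Real.sqrt T)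

/-- Black-Scholes put price (via put-call parity). -/
noncomputable def putBS (S₀ K r T σ : ℝ) : ℝ :=
  callBS S₀ K r T σ - S₀ + K * Real.exp (-(r * T))

open scoped NNReal ENNReal

lemma phi_pos (x : ℝ) : 0 < phi x := by
  have : (0:ℝ) < Real.sqrt (2 * Real.pi) := Real.sqrt_pos.2 (by positivity)
  exact mul_pos (inv_pos.2 this) (Real.exp_pos _)

lemma Phi_eq (x : ℝ) : Phi x = ∫ y in Set.Iic x, phi y := rfl

lemma continuous_phi : Continuous phi := by
  unfold phi; fun_prop

lemma integrable_phi : Integrable phi := by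
  have h : phi = fun x => (Real.sqrt (2 * Real.pi))⁻¹ * Real.exp (-(1/2) * x ^ 2) := by
    funext x; unfold phi; ring_nf
  rw [h]
  exact (integrable_exp_neg_mul_sq (by norm_num)).const_mul _

lemma integral_phi : ∫ x, phi x = 1 := by
  have h : ∫ x, phi x = (Real.sqrt (2 * Real.pi))⁻¹ * ∫ x, Real.exp (-(1/2) * x ^ 2) := by
    rw [← integral_const_mul]; congr 1; funext x; unfold phi; ring_nf
  rw [h, integral_gaussian]
  have : Real.sqrt (π / (1/2)) = Real.sqrt (2 * π) := by norm_num; ring_nf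
  rw [this, inv_mul_cancel₀ (ne_of_gt (Real.sqrt_pos.2 (by positivity)))]

lemma exp_mul_phi (c x : ℝ) : Real.exp (c * x) * phi x = Real.exp (c ^ 2 / 2) * phi (x - c) := by
  unfold phi
  rw [mul_left_comm, ← Real.exp_add, mul_left_comm, ← Real.exp_add]
  congr 2; ring

lemma integrable_exp_mul_phi (c : ℝ) : Integrable (fun x => Real.exp (c * x) * phi x) := by
  simp_rw [exp_mul_phi]
  exact (integrable_phi.comp_sub_right c).const_mul _

lemma integral_exp_mul_phi (c : ℝ) : ∫ x, Real.exp (c * x) * phi x = Real.exp (c ^ 2 / 2) := by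
  simp_rw [exp_mul_phi]
  rw [integral_const_mul, integral_sub_right_eq_self phi c, integral_phi, mul_one]

lemma setIntegral_phi_sub (c s : ℝ) : ∫ x in Set.Iic s, phi (x - c) = Phi (s - c) := by
  rw [Phi_eq, ← integral_indicator measurableSet_Iic, ← integral_indicator measurableSet_Iic,
    ← integral_add_right_eq_self (fun x => Set.indicator (Set.Iic s) (fun y => phi (y - c)) x) c]
  congr 1; funext x
  by_cases hx : x ≤ s - c
  · rw [Set.indicator_of_mem (by simp only [Set.mem_Iic]; linarith),
      Set.indicator_of_mem (by simpa using hx)]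
    simp
  · rw [Set.indicator_of_notMem (by simp only [Set.mem_Iic]; intro hc; exact hx (by linarith)),
      Set.indicator_of_notMem (by simpa using hx)]

lemma phi_neg (x : ℝ) : phi (-x) = phi x := by unfold phi; ring_nf

lemma Phi_add_Ioi (s : ℝ) : Phi s + ∫ x in Set.Ioi s, phi x = 1 := by
  rw [Phi_eq, intervalIntegral.integral_Iic_add_Ioi integrable_phi.integrableOn integrable_phi.integrableOn,
    integral_phi]

lemma setIntegral_phi_Ioi (s : ℝ) : ∫ x in Set.Ioi s, phi x = 1 - Phi s := by
  have := Phi_add_Ioi s; linarith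

lemma Phi_neg (s : ℝ) : Phi (-s) = 1 - Phi s := by
  rw [← setIntegral_phi_Ioi, Phi_eq]
  rw [← setIntegral_congr_set (Iio_ae_eq_Iic (a := -s))]
  rw [← integral_indicator measurableSet_Iio, ← integral_indicator measurableSet_Ioi,
    ← integral_neg_eq_self (fun x => Set.indicator (Set.Ioi s) phi x)]
  congr 1; funext x
  simp only [Set.indicator, Set.mem_Iio, Set.mem_Ioi]
  rcases lt_or_ge x (-s) with hx | hx
  · rw [if_pos hx, if_pos (by linarith), phi_neg]
  · rw [if_neg (by linarith), if_neg (by intro hc; linarith)]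

lemma Phi_pos (s : ℝ) : 0 < Phi s := by
  rw [Phi_eq]
  rw [setIntegral_pos_iff_support_of_nonneg_ae
    (Filter.Eventually.of_forall fun x => (phi_pos x).le) integrable_phi.integrableOn]
  have : Function.support phi = Set.univ := by
    ext x; simp [Function.mem_support, (phi_pos x).ne']
  rw [this, Set.univ_inter]
  simp [Real.volume_Iic]

lemma Phi_lt_one (s : ℝ) : Phi s < 1 := by
  have h := Phi_pos (-s); rw [Phi_neg] at h; linarith

lemma setIntegral_exp_mul_phi_Iic (c s : ℝ) :
    ∫ x in Set.Iic s, Real.exp (c * x) * phi x = Real.exp (c ^ 2 / 2) * Phi (s - c) := by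
  simp_rw [exp_mul_phi]
  rw [integral_const_mul, setIntegral_phi_sub]

lemma setIntegral_exp_mul_phi_Ioi (c s : ℝ) :
    ∫ x in Set.Ioi s, Real.exp (c * x) * phi x = Real.exp (c ^ 2 / 2) * (1 - Phi (s - c)) := by
  have hsplit := intervalIntegral.integral_Iic_add_Ioi (b := s) (integrable_exp_mul_phi c).integrableOn
    (integrable_exp_mul_phi c).integrableOn
  rw [integral_exp_mul_phi] at hsplit
  rw [setIntegral_exp_mul_phi_Iic] at hsplit
  linarith [hsplit]

lemma phi_nonneg (x : ℝ) : 0 ≤ phi x := (phi_pos x).le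

lemma gaussianPDFReal_eq_phi : gaussianPDFReal 0 1 = phi := by
  funext x
  rw [gaussianPDFReal]
  push_cast
  rw [phi]
  norm_num

lemma integral_gaussianReal (f : ℝ → ℝ) :
    ∫ z, f z ∂(gaussianReal 0 1) = ∫ z, phi z * f z := by
  rw [gaussianReal_of_var_ne_zero 0 one_ne_zero, gaussianPDF_def, gaussianPDFReal_eq_phi]
  have : (fun x => ENNReal.ofReal (phi x)) = fun x => ((Real.toNNReal (phi x) : ℝ≥0) : ℝ≥0∞) :=
    rfl
  rw [this, integral_withDensity_eq_integral_smul
    (continuous_phi.measurable.real_toNNReal) f]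
  congr 1; funext x
  rw [NNReal.smul_def, smul_eq_mul, Real.coe_toNNReal _ (phi_nonneg x)]

lemma integrable_phi_mul (f g : ℝ → ℝ)
    (hf : AEStronglyMeasurable (fun z => phi z * f z) volume)
    (hg : Integrable (fun z => phi z * g z)) (h : ∀ z, |f z| ≤ g z) :
    Integrable fun z => phi z * f z := by
  refine hg.mono hf (Filter.Eventually.of_forall fun z => ?_)
  rw [Real.norm_eq_abs, Real.norm_eq_abs, abs_mul, abs_mul, abs_of_nonneg (phi_nonneg z)]
  exact mul_le_mul_of_nonneg_left ((h z).trans (le_abs_self _)) (phi_nonneg z)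

lemma integrable_phi_mul_exp (c q : ℝ) :
    Integrable (fun z => phi z * (q * Real.exp (c * z))) := by
  have : (fun z => phi z * (q * Real.exp (c * z)))
      = fun z => q * (Real.exp (c * z) * phi z) := by funext z; ring
  rw [this]; exact (integrable_exp_mul_phi c).const_mul q

lemma exp_threshold_lt {c A K b : ℝ} (hc : 0 < c) (hA : 0 < A)
    (hb : A * Real.exp (c * b) = K) {z : ℝ} (hz : z < b) : A * Real.exp (c * z) < K := by
  rw [← hb]
  exact mul_lt_mul_of_pos_left (Real.exp_lt_exp.2 (by nlinarith)) hA

lemma exp_threshold_le {c A K b : ℝ} (hc : 0 < c) (hA : 0 < A)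
    (hb : A * Real.exp (c * b) = K) {z : ℝ} (hz : z ≤ b) : A * Real.exp (c * z) ≤ K := by
  rw [← hb]
  exact mul_le_mul_of_nonneg_left (Real.exp_le_exp.2 (by nlinarith)) hA.le

lemma exp_threshold_gt {c A K b : ℝ} (hc : 0 < c) (hA : 0 < A)
    (hb : A * Real.exp (c * b) = K) {z : ℝ} (hz : b < z) : K < A * Real.exp (c * z) := by
  rw [← hb]
  exact mul_lt_mul_of_pos_left (Real.exp_lt_exp.2 (by nlinarith)) hA

lemma meas_call (A c K : ℝ) :
    AEStronglyMeasurable (fun z => phi z * max (A * Real.exp (c * z) - K) 0) volume := by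
  apply Continuous.aestronglyMeasurable
  exact continuous_phi.mul (((continuous_const.mul (continuous_exp.comp
    (continuous_const.mul continuous_id))).sub continuous_const).max continuous_const)

lemma meas_put (A c K : ℝ) :
    AEStronglyMeasurable (fun z => phi z * max (K - A * Real.exp (c * z)) 0) volume := by
  apply Continuous.aestronglyMeasurable
  exact continuous_phi.mul ((continuous_const.sub (continuous_const.mul (continuous_exp.comp
    (continuous_const.mul continuous_id)))).max continuous_const)

lemma integrable_call (A c K : ℝ) (hA : 0 < A) (hK : 0 < K) :
    Integrable (fun z => phi z * max (A * Real.exp (c * z) - K) 0) := by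
  refine integrable_phi_mul _ _ (meas_call A c K) (integrable_phi_mul_exp c A) fun z => ?_
  rw [abs_of_nonneg (le_max_right _ _)]
  exact max_le (by nlinarith [Real.exp_pos (c * z)]) (by positivity)

lemma integrable_put (A c K : ℝ) (hA : 0 < A) (hK : 0 < K) :
    Integrable (fun z => phi z * max (K - A * Real.exp (c * z)) 0) := by
  refine integrable_phi_mul _ _ (meas_put A c K) (integrable_phi.mul_const K) fun z => ?_
  rw [abs_of_nonneg (le_max_right _ _)]
  exact max_le (by nlinarith [Real.exp_pos (c * z)]) hK.le

lemma L_call (c A K b : ℝ) (hc : 0 < c) (hA : 0 < A) (hK : 0 < K)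
    (hb : A * Real.exp (c * b) = K) :
    ∫ z, phi z * max (A * Real.exp (c * z) - K) 0
      = A * Real.exp (c ^ 2 / 2) * (1 - Phi (b - c)) - K * (1 - Phi b) := by
  have hInt := integrable_call A c K hA hK
  rw [← intervalIntegral.integral_Iic_add_Ioi (b := b) hInt.integrableOn hInt.integrableOn]
  have h1 : ∫ z in Set.Iic b, phi z * max (A * Real.exp (c * z) - K) 0 = 0 := by
    rw [setIntegral_congr_fun measurableSet_Iic (g := fun _ => (0:ℝ))
      (fun z hz => by
        have := exp_threshold_le hc hA hb (Set.mem_Iic.1 hz)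
        rw [max_eq_right (by linarith), mul_zero])]
    simp
  have h2 : ∫ z in Set.Ioi b, phi z * max (A * Real.exp (c * z) - K) 0
      = A * (Real.exp (c ^ 2 / 2) * (1 - Phi (b - c))) - K * (1 - Phi b) := by
    rw [setIntegral_congr_fun measurableSet_Ioi
      (g := fun z => A * (Real.exp (c * z) * phi z) - K * phi z)
      (fun z hz => by
        have := exp_threshold_gt hc hA hb (Set.mem_Ioi.1 hz)
        rw [max_eq_left (by linarith)]; ring)]
    rw [integral_sub (((integrable_exp_mul_phi c).const_mul A).integrableOn)
      ((integrable_phi.const_mul K).integrableOn), integral_const_mul, integral_const_mul,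
      setIntegral_exp_mul_phi_Ioi, setIntegral_phi_Ioi]
  rw [h1, h2]; ring

lemma L_put (c A K b : ℝ) (hc : 0 < c) (hA : 0 < A) (hK : 0 < K)
    (hb : A * Real.exp (c * b) = K) :
    ∫ z, phi z * max (K - A * Real.exp (c * z)) 0
      = K * Phi b - A * Real.exp (c ^ 2 / 2) * Phi (b - c) := by
  have hInt := integrable_put A c K hA hK
  rw [← intervalIntegral.integral_Iic_add_Ioi (b := b) hInt.integrableOn hInt.integrableOn]
  have h1 : ∫ z in Set.Iic b, phi z * max (K - A * Real.exp (c * z)) 0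
      = K * Phi b - A * (Real.exp (c ^ 2 / 2) * Phi (b - c)) := by
    rw [setIntegral_congr_fun measurableSet_Iic
      (g := fun z => K * phi z - A * (Real.exp (c * z) * phi z))
      (fun z hz => by
        have := exp_threshold_le hc hA hb (Set.mem_Iic.1 hz)
        rw [max_eq_left (by linarith)]; ring)]
    rw [integral_sub ((integrable_phi.const_mul K).integrableOn)
      (((integrable_exp_mul_phi c).const_mul A).integrableOn), integral_const_mul,
      integral_const_mul, setIntegral_exp_mul_phi_Iic, ← Phi_eq]
  have h2 : ∫ z in Set.Ioi b, phi z * max (K - A * Real.exp (c * z)) 0 = 0 := by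
    rw [setIntegral_congr_fun measurableSet_Ioi (g := fun _ => (0:ℝ))
      (fun z hz => by
        have := exp_threshold_gt hc hA hb (Set.mem_Ioi.1 hz)
        rw [max_eq_right (by linarith), mul_zero])]
    simp
  rw [h1, h2]; ring

lemma integrable_ind_Iic (c A b₀ : ℝ) (hA : 0 ≤ A) :
    Integrable (fun z => phi z *
      (Set.indicator (Set.Iic b₀) (fun z => A * Real.exp (c * z)) z)) := by
  refine integrable_phi_mul _ _ ?_ (integrable_phi_mul_exp c A) fun z => ?_
  · exact (continuous_phi.measurable.mul (((measurable_exp.comp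
      (measurable_const.mul measurable_id)).const_mul A).indicator
      measurableSet_Iic)).aestronglyMeasurable
  · rw [abs_of_nonneg (Set.indicator_nonneg (fun z _ => by positivity) z)]
    exact Set.indicator_le_self' (fun z _ => by positivity) z

lemma integrable_ind_Ioi (c A b₀ : ℝ) (hA : 0 ≤ A) :
    Integrable (fun z => phi z *
      (Set.indicator (Set.Ioi b₀) (fun z => A * Real.exp (c * z)) z)) := by
  refine integrable_phi_mul _ _ ?_ (integrable_phi_mul_exp c A) fun z => ?_
  · exact (continuous_phi.measurable.mul (((measurable_exp.comp
      (measurable_const.mul measurable_id)).const_mul A).indicator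
      measurableSet_Ioi)).aestronglyMeasurable
  · rw [abs_of_nonneg (Set.indicator_nonneg (fun z _ => by positivity) z)]
    exact Set.indicator_le_self' (fun z _ => by positivity) z

lemma L_Iic (c A b₀ : ℝ) :
    ∫ z, phi z * (Set.indicator (Set.Iic b₀) (fun z => A * Real.exp (c * z)) z)
      = A * Real.exp (c ^ 2 / 2) * Phi (b₀ - c) := by
  have : (fun z => phi z * (Set.indicator (Set.Iic b₀) (fun z => A * Real.exp (c * z)) z))
      = Set.indicator (Set.Iic b₀) (fun z => A * (Real.exp (c * z) * phi z)) := by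
    funext z
    by_cases hz : z ∈ Set.Iic b₀
    · rw [Set.indicator_of_mem hz, Set.indicator_of_mem hz]; ring
    · rw [Set.indicator_of_notMem hz, Set.indicator_of_notMem hz, mul_zero]
  rw [this, integral_indicator measurableSet_Iic, integral_const_mul,
    setIntegral_exp_mul_phi_Iic]
  ring

lemma L_Ioi (c A b₀ : ℝ) :
    ∫ z, phi z * (Set.indicator (Set.Ioi b₀) (fun z => A * Real.exp (c * z)) z)
      = A * Real.exp (c ^ 2 / 2) * (1 - Phi (b₀ - c)) := by
  have : (fun z => phi z * (Set.indicator (Set.Ioi b₀) (fun z => A * Real.exp (c * z)) z))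
      = Set.indicator (Set.Ioi b₀) (fun z => A * (Real.exp (c * z) * phi z)) := by
    funext z
    by_cases hz : z ∈ Set.Ioi b₀
    · rw [Set.indicator_of_mem hz, Set.indicator_of_mem hz]; ring
    · rw [Set.indicator_of_notMem hz, Set.indicator_of_notMem hz, mul_zero]
  rw [this, integral_indicator measurableSet_Ioi, integral_const_mul,
    setIntegral_exp_mul_phi_Ioi]
  ring

theorem stmt7 (S₀ Kp Kc σ T r μp μc : ℝ) (hS : 0 < S₀) (hKp : 0 < Kp) (hKc : 0 < Kc)
    (hσ : 0 < σ) (hT : 0 < T) (hr : 0 ≤ r) (hμp : 0 < μp) (hμc : 0 < μc)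
    (h : ℝ → ℝ)
    (hh : ∀ a : ℝ, h a =
      μp * (∫ z, max (Kp - Real.exp ((a - r) * T) *
              (S₀ * Real.exp (r * T - σ ^ 2 * T / 2 + σ * Real.sqrt T * z))) 0
            ∂(gaussianReal 0 1)) +
      μc * (∫ z, max (Real.exp ((a - r) * T) *
              (S₀ * Real.exp (r * T - σ ^ 2 * T / 2 + σ * Real.sqrt T * z)) - Kc) 0
            ∂(gaussianReal 0 1)))
    (hratio : μc / μp = (1 - Phi (dBS S₀ Kp r T σ)) / Phi (dBS S₀ Kc r T σ)) :
    h r = Real.exp (r * T) * (μp * putBS S₀ Kp r T σ + μc * callBS S₀ Kc r T σ) ∧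
      ∀ a : ℝ, a ≠ r →
        h a - Real.exp (r * T) * (μp * putBS S₀ Kp r T σ + μc * callBS S₀ Kc r T σ) > 0 := by
  have hsT : 0 < Real.sqrt T := Real.sqrt_pos.2 hT
  set c : ℝ := σ * Real.sqrt T with hcdef
  have hc : 0 < c := mul_pos hσ hsT
  have hc2 : c ^ 2 = σ ^ 2 * T := by rw [hcdef, mul_pow, Real.sq_sqrt hT.le]
  set A : ℝ := S₀ * Real.exp (r * T - σ ^ 2 * T / 2) with hAdef
  have hA : 0 < A := mul_pos hS (Real.exp_pos _)
  have hSrw : ∀ z : ℝ, S₀ * Real.exp (r * T - σ ^ 2 * T / 2 + c * z)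
      = A * Real.exp (c * z) := fun z => by
    rw [Real.exp_add, hAdef]; ring
  have hAexp : A * Real.exp (c ^ 2 / 2) = S₀ * Real.exp (r * T) := by
    rw [hc2, hAdef, mul_assoc, ← Real.exp_add]
    congr 2
    ring
  -- thresholds
  have hbK : ∀ K : ℝ, 0 < K → A * Real.exp (c * (Real.log (K / A) / c)) = K := fun K hK => by
    rw [mul_div_cancel₀ _ hc.ne', Real.exp_log (div_pos hK hA), mul_div_cancel₀ _ hA.ne']
  set bp : ℝ := Real.log (Kp / A) / c with hbpdef
  set bc : ℝ := Real.log (Kc / A) / c with hbcdef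
  have hbp : A * Real.exp (c * bp) = Kp := hbK Kp hKp
  have hbc : A * Real.exp (c * bc) = Kc := hbK Kc hKc
  -- d values
  have hd : ∀ K : ℝ, 0 < K → dBS S₀ K r T σ = c - Real.log (K / A) / c := fun K hK => by
    have hlog : Real.log (S₀ / K) + T * (r + σ ^ 2 / 2) = c ^ 2 - Real.log (K / A) := by
      rw [Real.log_div hK.ne' hA.ne', hAdef, Real.log_mul hS.ne' (Real.exp_ne_zero _),
        Real.log_exp, Real.log_div hS.ne' hK.ne', hc2]
      ring
    rw [dBS, ← hcdef, hlog]
    field_simp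
  have hdp : dBS S₀ Kp r T σ = c - bp := by rw [hd Kp hKp, hbpdef]
  have hdc : dBS S₀ Kc r T σ = c - bc := by rw [hd Kc hKc, hbcdef]
  -- closed forms at a = r
  have eput : ∫ z, phi z * max (Kp - A * Real.exp (c * z)) 0
      = Real.exp (r * T) * putBS S₀ Kp r T σ := by
    rw [L_put c A Kp bp hc hA hKp hbp, hAexp, putBS, callBS, hdp, ← hcdef]
    rw [show c - bp - c = -bp by ring, show c - bp = -(bp - c) by ring, Phi_neg, Phi_neg,
      Real.exp_neg]
    field_simp
    ring
  have ecall : ∫ z, phi z * max (A * Real.exp (c * z) - Kc) 0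
      = Real.exp (r * T) * callBS S₀ Kc r T σ := by
    rw [L_call c A Kc bc hc hA hKc hbc, hAexp, callBS, hdc, ← hcdef]
    rw [show c - bc - c = -bc by ring, show c - bc = -(bc - c) by ring, Phi_neg, Phi_neg,
      Real.exp_neg]
    field_simp
  -- part 1
  have hr_eq : h r = Real.exp (r * T) * (μp * putBS S₀ Kp r T σ + μc * callBS S₀ Kc r T σ) := by
    rw [hh r, integral_gaussianReal, integral_gaussianReal]
    simp only [sub_self, zero_mul, Real.exp_zero, one_mul]
    simp_rw [hSrw]
    rw [eput, ecall]
    ring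
  -- ratio key
  have hPc : 0 < Phi (dBS S₀ Kc r T σ) := Phi_pos _
  have key : μp * (1 - Phi (dBS S₀ Kp r T σ)) = μc * Phi (dBS S₀ Kc r T σ) := by
    field_simp at hratio
    linarith
  -- indicator expectations
  have e3 : ∫ z, phi z * (Set.indicator (Set.Iic bp) (fun z => A * Real.exp (c * z)) z)
      = S₀ * Real.exp (r * T) * (1 - Phi (dBS S₀ Kp r T σ)) := by
    rw [L_Iic c A bp, hAexp, hdp, show bp - c = -(c - bp) by ring, Phi_neg]
  have e6 : ∫ z, phi z * (Set.indicator (Set.Ioi bc) (fun z => A * Real.exp (c * z)) z)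
      = S₀ * Real.exp (r * T) * Phi (dBS S₀ Kc r T σ) := by
    rw [L_Ioi c A bc, hAexp, hdc, show bc - c = -(c - bc) by ring, Phi_neg]
    ring
  refine ⟨hr_eq, fun a ha => ?_⟩
  -- part 2
  set m : ℝ := Real.exp ((a - r) * T) with hmdef
  have hm0 : 0 < m := Real.exp_pos _
  have hm1 : m ≠ 1 := by
    rw [hmdef, Ne, Real.exp_eq_one_iff]
    exact mul_ne_zero (sub_ne_zero.2 ha) hT.ne'
  have hB : 0 < m * A := mul_pos hm0 hA
  -- shifted thresholds
  have hshift : ∀ b₀ K : ℝ, A * Real.exp (c * b₀) = K →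
      m * A * Real.exp (c * (b₀ - Real.log m / c)) = K := fun b₀ K hb₀ => by
    rw [show c * (b₀ - Real.log m / c) = c * b₀ - Real.log m by field_simp,
      Real.exp_sub, Real.exp_log hm0, ← hb₀]
    field_simp
  have hbp' : m * A * Real.exp (c * (bp - Real.log m / c)) = Kp := hshift bp Kp hbp
  have hbc' : m * A * Real.exp (c * (bc - Real.log m / c)) = Kc := hshift bc Kc hbc
  -- integrabilities
  have I1 := integrable_put (m * A) c Kp hB hKp
  have I2 := integrable_put A c Kp hA hKp
  have I3 := integrable_ind_Iic c A bp hA.le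
  have I4 := integrable_call (m * A) c Kc hB hKc
  have I5 := integrable_call A c Kc hA hKc
  have I6 := integrable_ind_Ioi c A bc hA.le
  -- h a in Lebesgue form
  have hha : h a = μp * (∫ z, phi z * max (Kp - m * A * Real.exp (c * z)) 0)
      + μc * (∫ z, phi z * max (m * A * Real.exp (c * z) - Kc) 0) := by
    rw [hh a, integral_gaussianReal, integral_gaussianReal, ← hmdef]
    simp_rw [hSrw, show ∀ z : ℝ, m * (A * Real.exp (c * z)) = m * A * Real.exp (c * z)
      from fun z => by ring]
  have hhr : h r = μp * (∫ z, phi z * max (Kp - A * Real.exp (c * z)) 0)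
      + μc * (∫ z, phi z * max (A * Real.exp (c * z) - Kc) 0) := by
    rw [hh r, integral_gaussianReal, integral_gaussianReal]
    simp only [sub_self, zero_mul, Real.exp_zero, one_mul]
    simp_rw [hSrw]
  -- the combined nonnegative function
  set F : ℝ → ℝ := fun z =>
    μp * (phi z * max (Kp - m * A * Real.exp (c * z)) 0)
    - μp * (phi z * max (Kp - A * Real.exp (c * z)) 0)
    + (μp * (m - 1)) * (phi z * (Set.indicator (Set.Iic bp) (fun z => A * Real.exp (c * z)) z))
    + μc * (phi z * max (m * A * Real.exp (c * z) - Kc) 0)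
    - μc * (phi z * max (A * Real.exp (c * z) - Kc) 0)
    - (μc * (m - 1)) * (phi z * (Set.indicator (Set.Ioi bc) (fun z => A * Real.exp (c * z)) z))
    with hFdef
  have JF : Integrable F :=
    ((((((I1.const_mul μp).sub (I2.const_mul μp)).add
      (I3.const_mul (μp * (m - 1)))).add (I4.const_mul μc)).sub
      (I5.const_mul μc)).sub (I6.const_mul (μc * (m - 1))))
  have hFint : ∫ z, F z =
      μp * (∫ z, phi z * max (Kp - m * A * Real.exp (c * z)) 0)
      - μp * (∫ z, phi z * max (Kp - A * Real.exp (c * z)) 0)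
      + (μp * (m - 1)) * (S₀ * Real.exp (r * T) * (1 - Phi (dBS S₀ Kp r T σ)))
      + μc * (∫ z, phi z * max (m * A * Real.exp (c * z) - Kc) 0)
      - μc * (∫ z, phi z * max (A * Real.exp (c * z) - Kc) 0)
      - (μc * (m - 1)) * (S₀ * Real.exp (r * T) * Phi (dBS S₀ Kc r T σ)) := by
    rw [← e3, ← e6]
    simp only [hFdef]
    rw [integral_sub (f := fun z => μp * (phi z * max (Kp - m * A * Real.exp (c * z)) 0) - μp * (phi z * max (Kp - A * Real.exp (c * z)) 0) + (μp * (m - 1)) * (phi z * (Set.indicator (Set.Iic bp) (fun y => A * Real.exp (c * y)) z)) + μc * (phi z * max (m * A * Real.exp (c * z) - Kc) 0) - μc * (phi z * max (A * Real.exp (c * z) - Kc) 0)) (g := fun z => (μc * (m - 1)) * (phi z * (Set.indicator (Set.Ioi bc) (fun y => A * Real.exp (c * y)) z)))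
        ((((((I1.const_mul μp).sub (I2.const_mul μp)).add
        (I3.const_mul (μp * (m - 1)))).add (I4.const_mul μc)).sub
        (I5.const_mul μc))) (I6.const_mul (μc * (m - 1))),
      integral_sub (f := fun z => μp * (phi z * max (Kp - m * A * Real.exp (c * z)) 0) - μp * (phi z * max (Kp - A * Real.exp (c * z)) 0) + (μp * (m - 1)) * (phi z * (Set.indicator (Set.Iic bp) (fun y => A * Real.exp (c * y)) z)) + μc * (phi z * max (m * A * Real.exp (c * z) - Kc) 0)) (g := fun z => μc * (phi z * max (A * Real.exp (c * z) - Kc) 0))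
        ((((I1.const_mul μp).sub (I2.const_mul μp)).add
        (I3.const_mul (μp * (m - 1)))).add (I4.const_mul μc)) (I5.const_mul μc),
      integral_add (f := fun z => μp * (phi z * max (Kp - m * A * Real.exp (c * z)) 0) - μp * (phi z * max (Kp - A * Real.exp (c * z)) 0) + (μp * (m - 1)) * (phi z * (Set.indicator (Set.Iic bp) (fun y => A * Real.exp (c * y)) z))) (g := fun z => μc * (phi z * max (m * A * Real.exp (c * z) - Kc) 0))
        (((I1.const_mul μp).sub (I2.const_mul μp)).add
        (I3.const_mul (μp * (m - 1)))) (I4.const_mul μc),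
      integral_add (f := fun z => μp * (phi z * max (Kp - m * A * Real.exp (c * z)) 0) - μp * (phi z * max (Kp - A * Real.exp (c * z)) 0)) (g := fun z => (μp * (m - 1)) * (phi z * (Set.indicator (Set.Iic bp) (fun y => A * Real.exp (c * y)) z)))
        ((I1.const_mul μp).sub (I2.const_mul μp)) (I3.const_mul (μp * (m - 1))),
      integral_sub (f := fun z => μp * (phi z * max (Kp - m * A * Real.exp (c * z)) 0)) (g := fun z => μp * (phi z * max (Kp - A * Real.exp (c * z)) 0))
        (I1.const_mul μp) (I2.const_mul μp),
      integral_const_mul, integral_const_mul, integral_const_mul, integral_const_mul,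
      integral_const_mul, integral_const_mul]
  -- pointwise nonnegativity
  have hB1 : ∀ z : ℝ, 0 ≤ max (Kp - m * A * Real.exp (c * z)) 0
      - max (Kp - A * Real.exp (c * z)) 0
      + (m - 1) * (Set.indicator (Set.Iic bp) (fun z => A * Real.exp (c * z)) z) := by
    intro z
    rcases le_or_gt z bp with hz | hz
    · have hle : A * Real.exp (c * z) ≤ Kp := exp_threshold_le hc hA hbp hz
      have hind : Set.indicator (Set.Iic bp) (fun z => A * Real.exp (c * z)) z
          = A * Real.exp (c * z) := Set.indicator_of_mem (Set.mem_Iic.2 hz) _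
      rw [hind, max_eq_left (show (0:ℝ) ≤ Kp - A * Real.exp (c * z) by linarith)]
      have h1 : Kp - m * A * Real.exp (c * z) ≤ max (Kp - m * A * Real.exp (c * z)) 0 :=
        le_max_left _ _
      have h2 : (m - 1) * (A * Real.exp (c * z))
          = m * A * Real.exp (c * z) - A * Real.exp (c * z) := by ring
      linarith
    · have hgt : Kp < A * Real.exp (c * z) := exp_threshold_gt hc hA hbp hz
      have hind : Set.indicator (Set.Iic bp) (fun z => A * Real.exp (c * z)) z = 0 :=
        Set.indicator_of_notMem (by simpa using hz) _
      rw [hind, max_eq_right (show Kp - A * Real.exp (c * z) ≤ (0:ℝ) by linarith)]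
      have h1 : (0:ℝ) ≤ max (Kp - m * A * Real.exp (c * z)) 0 := le_max_right _ _
      linarith
  have hB2 : ∀ z : ℝ, 0 ≤ max (m * A * Real.exp (c * z) - Kc) 0
      - max (A * Real.exp (c * z) - Kc) 0
      - (m - 1) * (Set.indicator (Set.Ioi bc) (fun z => A * Real.exp (c * z)) z) := by
    intro z
    rcases le_or_gt z bc with hz | hz
    · have hle : A * Real.exp (c * z) ≤ Kc := exp_threshold_le hc hA hbc hz
      have hind : Set.indicator (Set.Ioi bc) (fun z => A * Real.exp (c * z)) z = 0 :=
        Set.indicator_of_notMem (by simpa using hz) _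
      rw [hind, max_eq_right (show A * Real.exp (c * z) - Kc ≤ (0:ℝ) by linarith)]
      have h1 : (0:ℝ) ≤ max (m * A * Real.exp (c * z) - Kc) 0 := le_max_right _ _
      linarith
    · have hgt : Kc < A * Real.exp (c * z) := exp_threshold_gt hc hA hbc hz
      have hind : Set.indicator (Set.Ioi bc) (fun z => A * Real.exp (c * z)) z
          = A * Real.exp (c * z) := Set.indicator_of_mem (Set.mem_Ioi.2 hz) _
      rw [hind, max_eq_left (show (0:ℝ) ≤ A * Real.exp (c * z) - Kc by linarith)]
      have h1 : m * A * Real.exp (c * z) - Kc ≤ max (m * A * Real.exp (c * z) - Kc) 0 :=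
        le_max_left _ _
      have h2 : (m - 1) * (A * Real.exp (c * z))
          = m * A * Real.exp (c * z) - A * Real.exp (c * z) := by ring
      linarith
  have hFform : ∀ z : ℝ, F z = phi z *
      (μp * (max (Kp - m * A * Real.exp (c * z)) 0 - max (Kp - A * Real.exp (c * z)) 0
        + (m - 1) * (Set.indicator (Set.Iic bp) (fun z => A * Real.exp (c * z)) z))
      + μc * (max (m * A * Real.exp (c * z) - Kc) 0 - max (A * Real.exp (c * z) - Kc) 0
        - (m - 1) * (Set.indicator (Set.Ioi bc) (fun z => A * Real.exp (c * z)) z))) := by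
    intro z; simp only [hFdef]; ring
  have hFnonneg : ∀ z : ℝ, 0 ≤ F z := fun z => by
    rw [hFform z]
    exact mul_nonneg (phi_pos z).le
      (add_nonneg (mul_nonneg hμp.le (hB1 z)) (mul_nonneg hμc.le (hB2 z)))
  -- positivity on an interval
  have hIoo : ∃ u v : ℝ, u < v ∧ ∀ z ∈ Set.Ioo u v, 0 < F z := by
    rcases lt_or_gt_of_ne hm1 with hmlt | hmgt
    · -- m < 1 : use (bc, bc - log m / c)
      have hlm : Real.log m < 0 := Real.log_neg hm0 hmlt
      have hgap : bc < bc - Real.log m / c := by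
        have h0 : 0 < (-Real.log m) / c := div_pos (neg_pos.2 hlm) hc
        have he : (-Real.log m) / c = -(Real.log m / c) := by ring
        linarith
      refine ⟨bc, bc - Real.log m / c, hgap, fun z hz => ?_⟩
      obtain ⟨hz1, hz2⟩ := hz
      have hgt : Kc < A * Real.exp (c * z) := exp_threshold_gt hc hA hbc hz1
      have hlt : m * A * Real.exp (c * z) < Kc := exp_threshold_lt hc hB hbc' hz2
      rw [hFform z]
      refine mul_pos (phi_pos z) ?_
      have hb2 : 0 < max (m * A * Real.exp (c * z) - Kc) 0
          - max (A * Real.exp (c * z) - Kc) 0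
          - (m - 1) * (Set.indicator (Set.Ioi bc) (fun z => A * Real.exp (c * z)) z) := by
        have hind : Set.indicator (Set.Ioi bc) (fun z => A * Real.exp (c * z)) z
            = A * Real.exp (c * z) := Set.indicator_of_mem (Set.mem_Ioi.2 hz1) _
        rw [hind, max_eq_left (show (0:ℝ) ≤ A * Real.exp (c * z) - Kc by linarith),
          max_eq_right (show m * A * Real.exp (c * z) - Kc ≤ (0:ℝ) by linarith)]
        have h2 : (m - 1) * (A * Real.exp (c * z))
            = m * A * Real.exp (c * z) - A * Real.exp (c * z) := by ring
        linarith
      linarith [mul_pos hμc hb2, mul_nonneg hμp.le (hB1 z)]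
    · -- 1 < m : use (bp - log m / c, bp)
      have hlm : 0 < Real.log m := Real.log_pos hmgt
      refine ⟨bp - Real.log m / c, bp, sub_lt_self bp (div_pos hlm hc), fun z hz => ?_⟩
      obtain ⟨hz1, hz2⟩ := hz
      have hlt : A * Real.exp (c * z) < Kp := exp_threshold_lt hc hA hbp hz2
      have hgt : Kp < m * A * Real.exp (c * z) := exp_threshold_gt hc hB hbp' hz1
      rw [hFform z]
      refine mul_pos (phi_pos z) ?_
      have hb1 : 0 < max (Kp - m * A * Real.exp (c * z)) 0
          - max (Kp - A * Real.exp (c * z)) 0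
          + (m - 1) * (Set.indicator (Set.Iic bp) (fun z => A * Real.exp (c * z)) z) := by
        have hind : Set.indicator (Set.Iic bp) (fun z => A * Real.exp (c * z)) z
            = A * Real.exp (c * z) := Set.indicator_of_mem (Set.mem_Iic.2 hz2.le) _
        rw [hind, max_eq_left (show (0:ℝ) ≤ Kp - A * Real.exp (c * z) by linarith),
          max_eq_right (show Kp - m * A * Real.exp (c * z) ≤ (0:ℝ) by linarith)]
        have h2 : (m - 1) * (A * Real.exp (c * z))
            = m * A * Real.exp (c * z) - A * Real.exp (c * z) := by ring
        linarith
      linarith [mul_pos hμp hb1, mul_nonneg hμc.le (hB2 z)]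
  -- integral of F is positive
  have hFpos : 0 < ∫ z, F z := by
    obtain ⟨u, v, huv, hpos⟩ := hIoo
    rw [integral_pos_iff_support_of_nonneg hFnonneg JF]
    refine lt_of_lt_of_le ?_
      (measure_mono (fun z hz => (hpos z hz).ne' : Set.Ioo u v ⊆ Function.support F))
    rw [Real.volume_Ioo]
    exact ENNReal.ofReal_pos.2 (by linarith)
  -- assemble
  rw [← hr_eq, hha, hhr]
  rw [hFint] at hFpos
  have hzero : (μp * (m - 1)) * (S₀ * Real.exp (r * T) * (1 - Phi (dBS S₀ Kp r T σ)))
      - (μc * (m - 1)) * (S₀ * Real.exp (r * T) * Phi (dBS S₀ Kc r T σ)) = 0 := by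
    linear_combination ((m - 1) * (S₀ * Real.exp (r * T))) * key
  linarith
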